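/- Let the activation function g and the loss ℒ (in its second argument) be differentiable, and let θ̂ = γ_λ(θ) for an arbitrary parameter vector θ, a duplicated unit h ∈ {1,…,H_ℓ̂}, and λ_0,…,λ_K ∈ ℝ with Σ_{i=0}^K λ_i = 1. Then at θ̂ the partial derivative of the enlarged network's empirical risk with respect to the outgoing weight of each copied neuron equals that with respect to the outgoing weight of neuron h: ∂R̂_emp/∂ŵ_{j,H_ℓ̂+k}^{ℓ̂+1}(θ̂) = ∂R̂_emp/∂ŵ_{jh}^{ℓ̂+1}(θ̂) for all j = 1,…,H_{ℓ̂+1} and k = 1,…,K. -/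
import Mathlib


/-- Parameters of a fully connected feedforward network: `w ℓ j i` is the weight from
unit `i` of layer `ℓ-1` to unit `j` of layer `ℓ`, and `b ℓ j` is the bias of unit `j`
of layer `ℓ`.  Layers are numbered `1, …, L` (layer `0` is the input); units within a
layer are numbered from `0`, so layer `ℓ` consists of the units `0, …, H ℓ - 1`. -/
structure NNParams where
  w : ℕ → ℕ → ℕ → ℝ
  b : ℕ → ℕ → ℝ

/-- `layerOut g H θ x ℓ i` : the output of unit `i` of layer `ℓ` on input `x`
(`layerOut g H θ x 0 = x`, and for `ℓ ≥ 1` it is `g` applied to the pre-activation). -/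
noncomputable def layerOut (g : ℝ → ℝ) (H : ℕ → ℕ) (θ : NNParams) (x : ℕ → ℝ) :
    ℕ → ℕ → ℝ
  | 0, i => x i
  | ℓ + 1, i =>
      g (∑ j ∈ Finset.range (H ℓ), θ.w (ℓ + 1) i j * layerOut g H θ x ℓ j + θ.b (ℓ + 1) i)

/-- Pre-activation `a_j^ℓ(x, θ)` of unit `j` of layer `ℓ ≥ 1`:
`a_j^ℓ = ∑_{i < H (ℓ-1)} w_{ji}^ℓ · (output of unit i of layer ℓ-1) + σ_j^ℓ`.
The outputs of the last layer `L` are `f_r(x,θ) = preact g H θ x L r` (linear output units). -/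
noncomputable def preact (g : ℝ → ℝ) (H : ℕ → ℕ) (θ : NNParams) (x : ℕ → ℝ)
    (ℓ j : ℕ) : ℝ :=
  ∑ i ∈ Finset.range (H (ℓ - 1)), θ.w ℓ j i * layerOut g H θ x (ℓ - 1) i + θ.b ℓ j

/-- Empirical risk `R_emp(θ) = (1/P) ∑_{p<P} ℒ(y^p, f(x^p, θ))`, where the network has
`L` layers with layer sizes given by `H`, the training inputs are `X p` and the labels
`Y p`, and `m` is the output dimension seen by the loss. -/
noncomputable def Remp (g : ℝ → ℝ) (H : ℕ → ℕ) (L P : ℕ) {m : ℕ}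
    (X Y : ℕ → ℕ → ℝ) (loss : (ℕ → ℝ) → (Fin m → ℝ) → ℝ) (θ : NNParams) : ℝ :=
  (1 / (P : ℝ)) * ∑ p ∈ Finset.range P,
    loss (Y p) (fun r => preact g H θ (X p) L r)

/-- Layer sizes of the network enlarged by adding `K` new neurons to layer `l`. -/
def enlargeH (H : ℕ → ℕ) (l K : ℕ) : ℕ → ℕ :=
  fun ℓ => if ℓ = l then H l + K else H ℓ

/-- The embedding `α_{ζv}` : copy all parameters, give the `k`-th new neuron of layer `l`
(`k = 0, …, K-1`, i.e. unit `H l + k`) the bias `ζ k` and incoming weights `v k`, and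
set all weights from the new neurons to layer `l+1` to zero. -/
noncomputable def alphaEmb (H : ℕ → ℕ) (l K : ℕ) (ζ : ℕ → ℝ) (v : ℕ → ℕ → ℝ)
    (θ : NNParams) : NNParams where
  w := fun ℓ j i =>
    if ℓ = l ∧ H l ≤ j then v (j - H l) i
    else if ℓ = l + 1 ∧ H l ≤ i then 0
    else θ.w ℓ j i
  b := fun ℓ j => if ℓ = l ∧ H l ≤ j then ζ (j - H l) else θ.b ℓ j

/-- The embedding `β_{ζs}` : copy all parameters except the biases of layer `l+1`, give
the `k`-th new neuron of layer `l` the bias `ζ k` and zero incoming weights, set the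
outgoing weight from the `k`-th new neuron to unit `j` of layer `l+1` to `s j k`, and
replace the bias of unit `j` of layer `l+1` by `σ_j - ∑_{k<K} s j k · g (ζ k)`. -/
noncomputable def betaEmb (g : ℝ → ℝ) (H : ℕ → ℕ) (l K : ℕ) (ζ : ℕ → ℝ)
    (s : ℕ → ℕ → ℝ) (θ : NNParams) : NNParams where
  w := fun ℓ j i =>
    if ℓ = l ∧ H l ≤ j then 0
    else if ℓ = l + 1 ∧ H l ≤ i then s j (i - H l)
    else θ.w ℓ j i
  b := fun ℓ j =>
    if ℓ = l ∧ H l ≤ j then ζ (j - H l)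
    else if ℓ = l + 1 then θ.b (l + 1) j - ∑ k ∈ Finset.range K, s j k * g (ζ k)
    else θ.b ℓ j

/-- The embedding `γ_λ` : duplicate unit `h` of layer `l` into each of the `K` new
neurons (same bias and incoming weights as unit `h`), and split the outgoing weights:
unit `h` keeps `lam 0 · w_{jh}^{l+1}` and the `k`-th new neuron (`k = 0, …, K-1`,
i.e. unit `H l + k`, corresponding to `λ_{k+1}` of the paper) gets
`lam (k+1) · w_{jh}^{l+1}`; all other parameters are copied. -/
noncomputable def gammaEmb (H : ℕ → ℕ) (l K : ℕ) (h : ℕ) (lam : ℕ → ℝ)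
    (θ : NNParams) : NNParams where
  w := fun ℓ j i =>
    if ℓ = l ∧ H l ≤ j then θ.w l h i
    else if ℓ = l + 1 ∧ i = h then lam 0 * θ.w (l + 1) j h
    else if ℓ = l + 1 ∧ H l ≤ i then lam (i - H l + 1) * θ.w (l + 1) j h
    else θ.w ℓ j i
  b := fun ℓ j => if ℓ = l ∧ H l ≤ j then θ.b l h else θ.b ℓ j

/-- `θ` with the single weight `w ℓ j i` replaced by `t`. -/
noncomputable def updW (θ : NNParams) (ℓ j i : ℕ) (t : ℝ) : NNParams :=
  ⟨fun ℓ' j' i' => if ℓ' = ℓ ∧ j' = j ∧ i' = i then t else θ.w ℓ' j' i', θ.b⟩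

/-- `θ` with the single bias `b ℓ j` replaced by `t`. -/
noncomputable def updB (θ : NNParams) (ℓ j : ℕ) (t : ℝ) : NNParams :=
  ⟨θ.w, fun ℓ' j' => if ℓ' = ℓ ∧ j' = j then t else θ.b ℓ' j'⟩

/-- `∇ R_emp(θ) = 0` : every partial derivative of the empirical risk with respect to an
actual network parameter (a weight `w ℓ j i` or a bias `b ℓ j`, `1 ≤ ℓ ≤ L`, `j < H ℓ`,
`i < H (ℓ-1)`) vanishes at `θ`. -/
def IsCritical (g : ℝ → ℝ) (H : ℕ → ℕ) (L P : ℕ) {m : ℕ}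
    (X Y : ℕ → ℕ → ℝ) (loss : (ℕ → ℝ) → (Fin m → ℝ) → ℝ) (θ : NNParams) : Prop :=
  (∀ ℓ j i, 1 ≤ ℓ → ℓ ≤ L → j < H ℓ → i < H (ℓ - 1) →
      deriv (fun t => Remp g H L P X Y loss (updW θ ℓ j i t)) (θ.w ℓ j i) = 0) ∧
  ∀ ℓ j, 1 ≤ ℓ → ℓ ≤ L → j < H ℓ →
      deriv (fun t => Remp g H L P X Y loss (updB θ ℓ j t)) (θ.b ℓ j) = 0

/-- Layer sizes after enlarging layer `p.1` by `p.2` neurons for each pair in the list. -/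
def multiEnlargeH : (ℕ → ℕ) → List (ℕ × ℕ) → (ℕ → ℕ)
  | H, [] => H
  | H, (l, K) :: rest => multiEnlargeH (enlargeH H l K) rest

/-- Composition of `α` embeddings: for each `(l, K)` in the list (in order), add `K` new
neurons to layer `l` via `α` with biases `ζ l` and incoming weights `v l`. -/
noncomputable def multiAlpha (ζ : ℕ → ℕ → ℝ) (v : ℕ → ℕ → ℕ → ℝ) :
    (ℕ → ℕ) → List (ℕ × ℕ) → NNParams → NNParams
  | _, [], θ => θ
  | H, (l, K) :: rest, θ =>
      multiAlpha ζ v (enlargeH H l K) rest (alphaEmb H l K (ζ l) (v l) θ)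

noncomputable def multiBeta (g : ℝ → ℝ) (ζ : ℕ → ℕ → ℝ) (s : ℕ → ℕ → ℕ → ℝ) :
    (ℕ → ℕ) → List (ℕ × ℕ) → NNParams → NNParams
  | _, [], θ => θ
  | H, (l, K) :: rest, θ =>
      multiBeta g ζ s (enlargeH H l K) rest (betaEmb g H l K (ζ l) (s l) θ)

noncomputable def multiGamma (hsel : ℕ → ℕ) (lam : ℕ → ℕ → ℝ) :
    (ℕ → ℕ) → List (ℕ × ℕ) → NNParams → NNParams
  | _, [], θ => θ
  | H, (l, K) :: rest, θ =>
      multiGamma hsel lam (enlargeH H l K) rest (gammaEmb H l K (hsel l) (lam l) θ)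

/-- A single enlargement step: either a `β` embedding with zero outgoing weights, or a
`γ` embedding. -/
inductive EmbStep where
  | beta (l K : ℕ) (ζ : ℕ → ℝ)
  | gamma (l K : ℕ) (h : ℕ) (lam : ℕ → ℝ)

def EmbStep.layer : EmbStep → ℕ
  | .beta l _ _ => l
  | .gamma l _ _ _ => l

def EmbStep.count : EmbStep → ℕ
  | .beta _ K _ => K
  | .gamma _ K _ _ => K

noncomputable def EmbStep.apply (g : ℝ → ℝ) (H : ℕ → ℕ) (θ : NNParams) : EmbStep → NNParams
  | .beta l K ζ => betaEmb g H l K ζ (fun _ _ => 0) θ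
  | .gamma l K h lam => gammaEmb H l K h lam θ

def EmbStep.OK (H : ℕ → ℕ) (L : ℕ) : EmbStep → Prop
  | .beta l _ _ => 1 ≤ l ∧ l + 1 ≤ L
  | .gamma l K h lam => 1 ≤ l ∧ l + 1 ≤ L ∧ h < H l ∧ ∑ i ∈ Finset.range (K + 1), lam i = 1

noncomputable def applySteps (g : ℝ → ℝ) : (ℕ → ℕ) → List EmbStep → NNParams → NNParams
  | _, [], θ => θ
  | H, st :: rest, θ =>
      applySteps g (enlargeH H st.layer st.count) rest (EmbStep.apply g H θ st)

def stepsH : (ℕ → ℕ) → List EmbStep → (ℕ → ℕ)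
  | H, [] => H
  | H, st :: rest => stepsH (enlargeH H st.layer st.count) rest

/-- If `g` and the loss (in its second argument) are differentiable and
`θ̂ = γ_λ(θ)` for a duplicated unit `h < H l` and coefficients `λ_0, …, λ_K` summing to
one, then at `θ̂` the partial derivative of the enlarged network's empirical risk with
respect to the outgoing weight of each copied neuron equals the partial derivative with
respect to the outgoing weight of neuron `h`. -/
theorem gammaEmb_copied_outgoing_deriv_eq
    (g : ℝ → ℝ) (H : ℕ → ℕ) (L P : ℕ) (X Y : ℕ → ℕ → ℝ)
    (loss : (ℕ → ℝ) → (Fin (H L) → ℝ) → ℝ)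
    (hg : Differentiable ℝ g)
    (hloss : ∀ y : ℕ → ℝ,
      Differentiable ℝ (fun z : EuclideanSpace ℝ (Fin (H L)) => loss y z))
    (l : ℕ) (hl1 : 1 ≤ l) (hlL : l + 1 ≤ L) (K : ℕ)
    (h : ℕ) (hh : h < H l) (lam : ℕ → ℝ)
    (hlam : ∑ i ∈ Finset.range (K + 1), lam i = 1)
    (θ : NNParams) (θhat : NNParams) (hemb : θhat = gammaEmb H l K h lam θ) :
    ∀ j k, j < H (l + 1) → k < K →
      deriv (fun t => Remp g (enlargeH H l K) L P X Y loss
            (updW θhat (l + 1) j (H l + k) t))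
          (θhat.w (l + 1) j (H l + k))
        = deriv (fun t => Remp g (enlargeH H l K) L P X Y loss
              (updW θhat (l + 1) j h t))
            (θhat.w (l + 1) j h) := by
  subst hemb
  intro j k hj hk
  set Hn := enlargeH H l K with hHn
  set θh := gammaEmb H l K h lam θ with hθh
  set δ : ℝ := θh.w (l + 1) j h - θh.w (l + 1) j (H l + k) with hδ
  have hHl : Hn l = H l + K := by simp [hHn, enlargeH]
  -- main pointwise equality of the two parametrized risks (up to a shift by δ)
  have main : ∀ (t : ℝ) (x : ℕ → ℝ) (r : ℕ),
      preact g Hn (updW θh (l + 1) j (H l + k) t) x L r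
        = preact g Hn (updW θh (l + 1) j h (t + δ)) x L r := by
    intro t x r
    set θ1 := updW θh (l + 1) j (H l + k) t with hθ1
    set θ2 := updW θh (l + 1) j h (t + δ) with hθ2
    -- the two copies of unit h produce equal outputs (for either parameter vector,
    -- since layers ≤ l are untouched by updW)
    have hWlow : ∀ (θ' : NNParams) (hθ' : θ' = θ1 ∨ θ' = θ2) (ℓ u i : ℕ), ℓ ≠ l + 1 →
        θ'.w ℓ u i = θh.w ℓ u i := by
      rintro θ' (rfl | rfl) ℓ u i hne <;>
        · simp only [hθ1, hθ2, updW]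
          rw [if_neg]
          rintro ⟨h1, -, -⟩
          exact hne h1
    have hB : ∀ (θ' : NNParams) (hθ' : θ' = θ1 ∨ θ' = θ2) (ℓ u : ℕ),
        θ'.b ℓ u = θh.b ℓ u := by
      rintro θ' (rfl | rfl) ℓ u <;> simp [hθ1, hθ2, updW]
    have hdup : ∀ (θ' : NNParams), θ' = θ1 ∨ θ' = θ2 →
        layerOut g Hn θ' x l (H l + k) = layerOut g Hn θ' x l h := by
      intro θ' hθ'
      obtain ⟨m, rfl⟩ : ∃ m, l = m + 1 := ⟨l - 1, (Nat.succ_pred_eq_of_pos hl1).symm⟩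
      simp only [layerOut]
      congr 1
      have hw1 : ∀ i, θ'.w (m + 1) (H (m + 1) + k) i = θ.w (m + 1) h i := by
        intro i
        rw [hWlow θ' hθ' _ _ _ (by omega)]
        simp [hθh, gammaEmb, Nat.le_add_right]
      have hw2 : ∀ i, θ'.w (m + 1) h i = θ.w (m + 1) h i := by
        intro i
        rw [hWlow θ' hθ' _ _ _ (by omega)]
        simp [hθh, gammaEmb, Nat.not_le.mpr hh]
      have hb1 : θ'.b (m + 1) (H (m + 1) + k) = θ.b (m + 1) h := by
        rw [hB θ' hθ']; simp [hθh, gammaEmb, Nat.le_add_right]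
      have hb2 : θ'.b (m + 1) h = θ.b (m + 1) h := by
        rw [hB θ' hθ']; simp [hθh, gammaEmb, Nat.not_le.mpr hh]
      rw [hb1, hb2]
      congr 1
      exact Finset.sum_congr rfl fun i _ => by rw [hw1, hw2]
    -- pre-activation sums at layer ℓ+1 agree, given output agreement at layer ℓ
    have hstep : ∀ ℓ : ℕ, (∀ u, layerOut g Hn θ1 x ℓ u = layerOut g Hn θ2 x ℓ u) →
        ∀ u, (∑ i ∈ Finset.range (Hn ℓ), θ1.w (ℓ + 1) u i * layerOut g Hn θ1 x ℓ i
                + θ1.b (ℓ + 1) u)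
          = (∑ i ∈ Finset.range (Hn ℓ), θ2.w (ℓ + 1) u i * layerOut g Hn θ2 x ℓ i
                + θ2.b (ℓ + 1) u) := by
      intro ℓ hE u
      rw [hB θ1 (Or.inl rfl), hB θ2 (Or.inr rfl)]
      congr 1
      by_cases hc : ℓ = l ∧ u = j
      · obtain ⟨rfl, rfl⟩ := hc
        set O : ℕ → ℝ := fun i => layerOut g Hn θ1 x ℓ i with hO
        set W : ℕ → ℝ := fun i => θh.w (ℓ + 1) u i with hW
        have hw1 : ∀ i, θ1.w (ℓ + 1) u i = if i = H ℓ + k then t else W i := by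
          intro i; simp [hθ1, updW, hW]
        have hw2 : ∀ i, θ2.w (ℓ + 1) u i = if i = h then t + δ else W i := by
          intro i; simp [hθ2, updW, hW]
        have haux : ∀ (a : ℕ) (c : ℝ), a < H ℓ + K →
            ∑ i ∈ Finset.range (H ℓ + K), (if i = a then c else W i) * O i
              = (∑ i ∈ Finset.range (H ℓ + K), W i * O i) + (c - W a) * O a := by
          intro a c ha
          have ham : a ∈ Finset.range (H ℓ + K) := Finset.mem_range.mpr ha
          have hcg : ∑ i ∈ (Finset.range (H ℓ + K)).erase a, (if i = a then c else W i) * O i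
              = ∑ i ∈ (Finset.range (H ℓ + K)).erase a, W i * O i :=
            Finset.sum_congr rfl fun i hi => by rw [if_neg (Finset.ne_of_mem_erase hi)]
          rw [← Finset.sum_erase_add _ _ ham,
            ← Finset.sum_erase_add (Finset.range (H ℓ + K)) (fun i => W i * O i) ham,
            if_pos rfl, hcg]
          ring
        calc ∑ i ∈ Finset.range (Hn ℓ), θ1.w (ℓ + 1) u i * layerOut g Hn θ1 x ℓ i
            = ∑ i ∈ Finset.range (H ℓ + K), (if i = H ℓ + k then t else W i) * O i := by
              rw [hHl]; exact Finset.sum_congr rfl fun i _ => by rw [hw1]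
          _ = (∑ i ∈ Finset.range (H ℓ + K), W i * O i) + (t - W (H ℓ + k)) * O (H ℓ + k) :=
              haux _ _ (by omega)
          _ = (∑ i ∈ Finset.range (H ℓ + K), W i * O i) + ((t + δ) - W h) * O h := by
              have hOk : O (H ℓ + k) = O h := hdup θ1 (Or.inl rfl)
              have hδ' : δ = W h - W (H ℓ + k) := hδ
              rw [hOk, hδ']; ring
          _ = ∑ i ∈ Finset.range (H ℓ + K), (if i = h then t + δ else W i) * O i :=
              (haux _ _ (by omega)).symm
          _ = ∑ i ∈ Finset.range (Hn ℓ), θ2.w (ℓ + 1) u i * layerOut g Hn θ2 x ℓ i := by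
              rw [hHl]
              exact Finset.sum_congr rfl fun i _ => by
                rw [hw2]; exact congrArg _ (hE i)
      · refine Finset.sum_congr rfl fun i _ => ?_
        have hw1 : θ1.w (ℓ + 1) u i = θh.w (ℓ + 1) u i := by
          simp only [hθ1, updW]
          rw [if_neg]; rintro ⟨h1, h2, -⟩; exact hc ⟨by omega, h2⟩
        have hw2 : θ2.w (ℓ + 1) u i = θh.w (ℓ + 1) u i := by
          simp only [hθ2, updW]
          rw [if_neg]; rintro ⟨h1, h2, -⟩; exact hc ⟨by omega, h2⟩
        rw [hw1, hw2, hE i]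
    have hout : ∀ ℓ u, layerOut g Hn θ1 x ℓ u = layerOut g Hn θ2 x ℓ u := by
      intro ℓ
      induction ℓ with
      | zero => intro u; simp [layerOut]
      | succ m ih =>
        intro u
        simp only [layerOut]
        exact congrArg g (hstep m ih u)
    obtain ⟨M, rfl⟩ : ∃ M, L = M + 1 := ⟨L - 1, (Nat.succ_pred_eq_of_pos (by omega)).symm⟩
    simpa [preact] using hstep M (hout M) r
  have hfun : (fun t => Remp g Hn L P X Y loss (updW θh (l + 1) j (H l + k) t))
      = fun t => Remp g Hn L P X Y loss (updW θh (l + 1) j h (t + δ)) := by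
    funext t
    unfold Remp
    congr 1
    refine Finset.sum_congr rfl fun p _ => ?_
    congr 1
    funext r
    exact main t (X p) r
  rw [hfun,
    deriv_comp_add_const (fun s => Remp g Hn L P X Y loss (updW θh (l + 1) j h s)) δ
      (θh.w (l + 1) j (H l + k))]
  congr 1
  rw [hδ]; ring
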